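/- Let H be an N×M complex matrix, σ² > 0, and D an M×M Hermitian positive semidefinite matrix. If there exists a vector v ∈ ℂ^M with D v = 0 and H v ≠ 0, then the supremum over all M×M Hermitian positive semidefinite matrices S of log₂ det(I_N + (1/σ²) H S Hᴴ) − tr(D S) is +∞; in particular, along S_t = t v vᴴ the objective equals log₂(1 + (t/σ²)‖Hv‖²) and tends to +∞. -/

import Mathlib

open Matrix ComplexOrder

noncomputable def dualObj {N M : ℕ} (H : Matrix (Fin N) (Fin M) ℂ) (σ2 : ℝ)
    (D : Matrix (Fin M) (Fin M) ℂ) (S : Matrix (Fin M) (Fin M) ℂ) : ℝ :=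
  Real.logb 2 ((1 + σ2⁻¹ • (H * S * Hᴴ)).det.re) - ((D * S).trace).re

lemma psd_real_smul {n : ℕ} {A : Matrix (Fin n) (Fin n) ℂ} (hA : A.PosSemidef) {t : ℝ}
    (ht : 0 ≤ t) : (t • A).PosSemidef := by
  refine posSemidef_iff_dotProduct_mulVec.mpr ⟨?_, fun x => ?_⟩
  · show _ᴴ = _
    rw [conjTranspose_smul, star_trivial, hA.1.eq]
  · rw [smul_mulVec, dotProduct_smul, RCLike.real_smul_eq_coe_mul]
    exact mul_nonneg (Complex.zero_le_real.mpr ht) (hA.dotProduct_mulVec_nonneg x)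

lemma psd_vecMulVec {n : ℕ} (v : Fin n → ℂ) : (vecMulVec v (star v)).PosSemidef := by
  rw [vecMulVec_eq Unit, ← conjTranspose_replicateCol]
  exact posSemidef_self_mul_conjTranspose _

lemma key {N M : ℕ} (H : Matrix (Fin N) (Fin M) ℂ) (σ2 : ℝ) (hσ2 : 0 < σ2)
    (D : Matrix (Fin M) (Fin M) ℂ) (v : Fin M → ℂ) (hv0 : D.mulVec v = 0) (t : ℝ) :
    dualObj H σ2 D (t • vecMulVec v (star v)) =
      Real.logb 2 (1 + t / σ2 * (star (H.mulVec v) ⬝ᵥ H.mulVec v).re) := by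
  set w := H.mulVec v with hw
  have hvv : vecMulVec v (star v) = replicateCol Unit v * replicateRow Unit (star v) := vecMulVec_eq Unit v (star v)
  have h1 : H * (t • vecMulVec v (star v)) * Hᴴ = t • (replicateCol Unit w * replicateRow Unit (star w)) := by
    rw [hvv, Matrix.mul_smul, Matrix.smul_mul]
    congr 1
    rw [← Matrix.mul_assoc H, Matrix.mul_assoc (H * replicateCol Unit v), ← replicateCol_mulVec,
      ← replicateRow_vecMul, ← star_mulVec]
  have h2 : D * (t • vecMulVec v (star v)) = 0 := by
    rw [hvv, Matrix.mul_smul, ← Matrix.mul_assoc, ← replicateCol_mulVec, hv0]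
    ext i j
    simp [Matrix.mul_apply]
  have h3 : σ2⁻¹ • (t • (replicateCol Unit w * replicateRow Unit (star w)))
      = replicateCol Unit ((σ2⁻¹ * t) • w) * replicateRow Unit (star w) := by
    rw [smul_smul, ← Matrix.smul_mul]
    congr 1
  have h4 : (1 + σ2⁻¹ • (H * (t • vecMulVec v (star v)) * Hᴴ)).det
      = 1 + ((σ2⁻¹ * t) • (star w ⬝ᵥ w) : ℂ) := by
    rw [h1, h3, det_one_add_replicateCol_mul_replicateRow, dotProduct_smul]
  unfold dualObj
  rw [h2, h4, trace_zero, Complex.zero_re, sub_zero]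
  congr 1
  rw [Complex.add_re, Complex.one_re, Complex.real_smul, Complex.mul_re,
    Complex.ofReal_re, Complex.ofReal_im]
  ring

theorem stmt_2 {N M : ℕ} (H : Matrix (Fin N) (Fin M) ℂ) (σ2 : ℝ) (hσ2 : 0 < σ2)
    (D : Matrix (Fin M) (Fin M) ℂ) (hD : D.PosSemidef)
    (v : Fin M → ℂ) (hv0 : D.mulVec v = 0) (hHv : H.mulVec v ≠ 0) :
    (∀ B : ℝ, ∃ S : Matrix (Fin M) (Fin M) ℂ, S.PosSemidef ∧ B < dualObj H σ2 D S) ∧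
      (∀ t : ℝ, 0 ≤ t →
        dualObj H σ2 D (t • vecMulVec v (star v)) =
          Real.logb 2 (1 + t / σ2 * (star (H.mulVec v) ⬝ᵥ H.mulVec v).re)) ∧
      Filter.Tendsto (fun t : ℝ => dualObj H σ2 D (t • vecMulVec v (star v)))
        Filter.atTop Filter.atTop := by
  set w := H.mulVec v with hw
  have hc : 0 < (star w ⬝ᵥ w).re := by
    have := dotProduct_star_self_pos_iff.mpr hHv
    exact (Complex.lt_def.mp this).1
  set c := (star w ⬝ᵥ w).re
  have htend : Filter.Tendsto (fun t : ℝ => dualObj H σ2 D (t • vecMulVec v (star v)))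
      Filter.atTop Filter.atTop := by
    have : (fun t : ℝ => dualObj H σ2 D (t • vecMulVec v (star v)))
        = fun t => Real.logb 2 (1 + t / σ2 * c) := by
      funext t; exact key H σ2 hσ2 D v hv0 t
    rw [this]
    apply (Real.tendsto_logb_atTop one_lt_two).comp
    apply Filter.tendsto_atTop_add_const_left
    exact (Filter.tendsto_id.atTop_div_const hσ2).atTop_mul_const hc
  refine ⟨fun B => ?_, fun t _ => key H σ2 hσ2 D v hv0 t, htend⟩
  obtain ⟨t, ht0, htB⟩ := ((htend.eventually_gt_atTop B).and (Filter.eventually_ge_atTop 0)).exists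
  exact ⟨t • vecMulVec v (star v), psd_real_smul (psd_vecMulVec v) htB, ht0⟩
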